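/- Let f : X → ℝ be differentiable and α-exp-concave on a convex set X ⊂ ℝᵈ (meaning x ↦ exp(-α f(x)) is concave on X), and suppose ‖x - y‖ ≤ D and ‖∇f(x)‖ ≤ G for all x, y ∈ X. Then for every γ ≤ (1/2)·min{1/(GD), α} and all x, y ∈ X: f(x) ≥ f(y) + ⟨∇f(y), x - y⟩ + (γ/2)·⟨∇f(y), x - y⟩². -/

import Mathlib

open RealInnerProductSpace

-- scalar key lemma
lemma hasDerivAt_H (c : ℝ) {v : ℝ} (hv : v < 1) :
    HasDerivAt (fun u : ℝ => -Real.log (1 - u) - u - c * u ^ 2)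
      ((1 - v)⁻¹ - 1 - c * (2 * v)) v := by
  have h0 : (1 : ℝ) - v ≠ 0 := by linarith
  have h1 : HasDerivAt (fun u : ℝ => 1 - u) (-1) v := (hasDerivAt_id v).const_sub 1
  have h2 : HasDerivAt (fun u : ℝ => Real.log (1 - u)) ((1 - v)⁻¹ * (-1)) v :=
    (Real.hasDerivAt_log h0).comp v h1
  have h3 : HasDerivAt (fun u : ℝ => c * u ^ 2) (c * (2 * v ^ 1)) v := by
    simpa using (hasDerivAt_pow 2 v).const_mul c
  have := (h2.neg.sub (hasDerivAt_id v)).sub h3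
  refine this.congr_deriv ?_
  ring

lemma key_log (c u : ℝ) (hc0 : 0 < c) (hc : c ≤ 1/4) (hu1 : u < 1)
    (hL : 1 - 1/(2*c) ≤ u) : u + c * u ^ 2 ≤ -Real.log (1 - u) := by
  set H : ℝ → ℝ := fun u => -Real.log (1 - u) - u - c * u ^ 2 with hHdef
  have hH0 : H 0 = 0 := by simp [hHdef]
  suffices h : 0 ≤ H u by simp only [hHdef] at h; linarith
  have hderiv : ∀ v : ℝ, v < 1 → HasDerivAt H ((1 - v)⁻¹ - 1 - c * (2 * v)) v :=
    fun v hv => hasDerivAt_H c hv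
  have hderiv_eq : ∀ v : ℝ, v < 1 →
      (1 - v)⁻¹ - 1 - c * (2 * v) = v * (1 - 2*c*(1-v)) / (1 - v) := by
    intro v hv
    have : (1:ℝ) - v ≠ 0 := by linarith
    field_simp
    ring
  rcases lt_trichotomy u 0 with h0 | h0 | h0
  · -- antitone on [u, 0]
    have anti : AntitoneOn H (Set.Icc u 0) := by
      apply antitoneOn_of_deriv_nonpos (convex_Icc u 0)
      · intro v hv
        exact ((hderiv v (by rcases hv with ⟨_, h⟩; linarith)).differentiableAt).continuousAt.continuousWithinAt
      · intro v hv
        rw [interior_Icc] at hv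
        exact ((hderiv v (by linarith [hv.2])).differentiableAt).differentiableWithinAt
      · intro v hv
        rw [interior_Icc] at hv
        have hv1 : v < 1 := by linarith [hv.2]
        rw [(hderiv v hv1).deriv, hderiv_eq v hv1]
        apply div_nonpos_of_nonpos_of_nonneg _ (by linarith)
        apply mul_nonpos_of_nonpos_of_nonneg (le_of_lt hv.2)
        -- 0 ≤ 1 - 2c(1-v) : from v > u ≥ 1 - 1/(2c)
        have h4 : (1 - v) * (2*c) ≤ (1/(2*c)) * (2*c) := by
          apply mul_le_mul_of_nonneg_right _ (by positivity)
          linarith [hv.1, hL]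
        rw [one_div, inv_mul_cancel₀ (by positivity : (2:ℝ)*c ≠ 0)] at h4
        nlinarith
    have := anti (Set.mem_Icc.mpr ⟨le_refl u, h0.le⟩) (Set.mem_Icc.mpr ⟨h0.le, le_refl 0⟩) h0.le
    rw [hH0] at this; exact this
  · rw [h0, hH0]
  · -- monotone on [0, u]
    have mono : MonotoneOn H (Set.Icc 0 u) := by
      apply monotoneOn_of_deriv_nonneg (convex_Icc 0 u)
      · intro v hv
        exact ((hderiv v (by rcases hv with ⟨_, h⟩; linarith)).differentiableAt).continuousAt.continuousWithinAt
      · intro v hv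
        rw [interior_Icc] at hv
        exact ((hderiv v (by linarith [hv.2])).differentiableAt).differentiableWithinAt
      · intro v hv
        rw [interior_Icc] at hv
        have hv1 : v < 1 := by linarith [hv.2]
        rw [(hderiv v hv1).deriv, hderiv_eq v hv1]
        apply div_nonneg _ (by linarith)
        apply mul_nonneg (le_of_lt hv.1)
        nlinarith [hv.1, hv1]
    have := mono (Set.mem_Icc.mpr ⟨le_refl 0, h0.le⟩) (Set.mem_Icc.mpr ⟨h0.le, le_refl u⟩) h0.le
    rw [hH0] at this; exact this

lemma concave_grad {d : ℕ} {X : Set (EuclideanSpace ℝ (Fin d))}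
    {h : EuclideanSpace ℝ (Fin d) → ℝ} {g x y : EuclideanSpace ℝ (Fin d)}
    (hc : ConcaveOn ℝ X h) (hx : x ∈ X) (hy : y ∈ X)
    (hg : HasGradientAt h g y) : h x ≤ h y + ⟪g, x - y⟫ := by
  have h0 : y + (0:ℝ) • (x - y) = y := by simp
  have hF : HasFDerivAt h ((InnerProductSpace.toDual ℝ _) g) y := hg
  have hcurve : HasDerivAt (fun t : ℝ => y + t • (x - y)) (x - y) 0 := by
    simpa using ((hasDerivAt_id (0:ℝ)).smul_const (x - y)).const_add y
  have hline : HasDerivAt (fun t : ℝ => h (y + t • (x - y))) ⟪g, x - y⟫ 0 := by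
    have := (h0 ▸ hF).comp_hasDerivAt 0 hcurve
    exact this
  have slope_ge : ∀ t ∈ Set.Ioc (0:ℝ) 1, h x - h y ≤ (h (y + t • (x - y)) - h y) / t := by
    intro t ht
    have hmem : y + t • (x - y) = (1 - t) • y + t • x := by module
    have hcc := hc.2 hy hx (by linarith [ht.2] : (0:ℝ) ≤ 1 - t) ht.1.le (by ring)
    rw [le_div_iff₀ ht.1, hmem]
    simp only [smul_eq_mul] at hcc
    nlinarith [hcc]
  have tends : Filter.Tendsto (fun t : ℝ => (h (y + t • (x - y)) - h y) / t)
      (nhdsWithin 0 (Set.Ioi 0)) (nhds ⟪g, x - y⟫) := by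
    have h1 := (hasDerivAt_iff_tendsto_slope).mp hline
    have h2 : Filter.Tendsto (slope (fun t : ℝ => h (y + t • (x - y))) 0)
        (nhdsWithin 0 (Set.Ioi 0)) (nhds ⟪g, x - y⟫) :=
      h1.mono_left (nhdsWithin_mono 0 (fun t ht => ne_of_gt ht))
    refine h2.congr (fun t => ?_)
    simp [slope_def_field, h0]
  have hev : ∀ᶠ t in nhdsWithin (0:ℝ) (Set.Ioi 0),
      h x - h y ≤ (h (y + t • (x - y)) - h y) / t := by
    filter_upwards [Ioc_mem_nhdsGT_of_mem (Set.mem_Ico.mpr ⟨le_refl 0, zero_lt_one⟩)] with t ht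
    exact slope_ge t ht
  have := ge_of_tendsto tends hev
  linarith

lemma grad_exp {d : ℕ} {f : EuclideanSpace ℝ (Fin d) → ℝ} {g y : EuclideanSpace ℝ (Fin d)} (α : ℝ)
    (hf : HasGradientAt f g y) :
    HasGradientAt (fun x => Real.exp (-α * f x)) ((-α * Real.exp (-α * f y)) • g) y := by
  have hF : HasFDerivAt f ((InnerProductSpace.toDual ℝ _) g) y := hf
  have h1 : HasFDerivAt (fun x => -α * f x) ((-α) • (InnerProductSpace.toDual ℝ _) g) y :=
    hF.const_mul (-α)
  have h2 := (Real.hasDerivAt_exp (-α * f y)).comp_hasFDerivAt y h1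
  rw [hasGradientAt_iff_hasFDerivAt]
  refine h2.congr_fderiv ?_
  ext v
  simp [real_inner_smul_left]
  ring

theorem stmt_3 {d : ℕ} (X : Set (EuclideanSpace ℝ (Fin d))) (hX : Convex ℝ X)
    (hXne : X.Nonempty) (f : EuclideanSpace ℝ (Fin d) → ℝ)
    (f' : EuclideanSpace ℝ (Fin d) → EuclideanSpace ℝ (Fin d))
    (hdiff : ∀ x ∈ X, HasGradientAt f (f' x) x)
    (α D G : ℝ) (hα : 0 < α) (hD : 0 < D) (hG : 0 < G)
    (hexp : ConcaveOn ℝ X (fun x => Real.exp (-α * f x)))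
    (hdiam : ∀ x ∈ X, ∀ y ∈ X, ‖x - y‖ ≤ D)
    (hgrad : ∀ x ∈ X, ‖f' x‖ ≤ G)
    (γ : ℝ) (hγ : γ ≤ 1 / 2 * min (1 / (G * D)) α) :
    ∀ x ∈ X, ∀ y ∈ X,
      f x ≥ f y + ⟪f' y, x - y⟫ + γ / 2 * ⟪f' y, x - y⟫ ^ 2 := by
  intro x hx y hy
  set s : ℝ := ⟪f' y, x - y⟫ with hs
  set γ₀ : ℝ := 1 / 2 * min (1 / (G * D)) α with hγ₀
  have hmin : (0:ℝ) < min (1 / (G * D)) α := lt_min (by positivity) hα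
  have hγ₀pos : 0 < γ₀ := by rw [hγ₀]; positivity
  have hγ₀GD : γ₀ ≤ 1 / (2 * (G * D)) := by
    have h := min_le_left (1 / (G * D)) α
    have : γ₀ ≤ 1 / 2 * (1 / (G * D)) := by rw [hγ₀]; linarith
    calc γ₀ ≤ 1 / 2 * (1 / (G * D)) := this
      _ = 1 / (2 * (G * D)) := by field_simp
  have hγ₀α : γ₀ ≤ α / 2 := by
    have h := min_le_right (1 / (G * D)) α
    rw [hγ₀]; linarith
  have hsle : |s| ≤ G * D := by
    calc |s| ≤ ‖f' y‖ * ‖x - y‖ := abs_real_inner_le_norm _ _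
      _ ≤ G * D := mul_le_mul (hgrad y hy) (hdiam x hx y hy) (norm_nonneg _) hG.le
  have h1 := concave_grad hexp hx hy (grad_exp α (hdiff y hy))
  rw [real_inner_smul_left, ← hs] at h1
  have h1' : Real.exp (-α * f x) ≤ Real.exp (-α * f y) * (1 - α * s) := by nlinarith [h1]
  have hpos : 0 < 1 - α * s := by
    nlinarith [Real.exp_pos (-α * f x), Real.exp_pos (-α * f y)]
  have h2log : -α * f x ≤ -α * f y + Real.log (1 - α * s) := by
    have h := Real.log_le_log (Real.exp_pos _) h1'
    rwa [Real.log_exp, Real.log_mul (Real.exp_ne_zero _) hpos.ne', Real.log_exp] at h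
  set c : ℝ := γ₀ / (2 * α) with hc
  have hc0 : 0 < c := by rw [hc]; positivity
  have hcle : c ≤ 1/4 := by
    rw [hc, div_le_iff₀ (by positivity)]; linarith
  have hu1 : α * s < 1 := by linarith
  have hce : c * (2 * α) = γ₀ := by rw [hc]; field_simp
  have hγs : γ₀ * |s| ≤ 1/2 := by
    calc γ₀ * |s| ≤ (1 / (2 * (G * D))) * (G * D) :=
          mul_le_mul hγ₀GD hsle (abs_nonneg s) (by positivity)
      _ = 1/2 := by field_simp
  have hαsabs : α * |s| ≤ 1 / (4 * c) := by
    rw [le_div_iff₀ (by positivity)]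
    calc α * |s| * (4 * c) = 2 * (c * (2 * α)) * |s| := by ring
      _ = 2 * γ₀ * |s| := by rw [hce]
      _ ≤ 1 := by linarith
  have h14 : (1:ℝ) ≤ 1 / (4 * c) := by
    rw [le_div_iff₀ (by positivity)]; linarith
  have hge : -(1 / (4 * c)) ≤ α * s := by
    nlinarith [mul_nonneg hα.le (by linarith [neg_abs_le s] : (0:ℝ) ≤ s + |s|)]
  have he2 : (1:ℝ) / (2 * c) = 2 * (1 / (4 * c)) := by field_simp; ring
  have hL : 1 - 1/(2*c) ≤ α * s := by rw [he2]; linarith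
  have hkey := key_log c (α * s) hc0 hcle hu1 hL
  have hcα : c * α = γ₀ / 2 := by rw [hc]; field_simp
  have hexpand : c * (α * s) ^ 2 = α * (γ₀ / 2 * s ^ 2) := by
    linear_combination (α * s ^ 2) * hcα
  have hfin : f y + s + γ₀ / 2 * s ^ 2 ≤ f x := by
    have hmul : α * (f y + s + γ₀ / 2 * s ^ 2) ≤ α * f x := by
      have he : α * (f y + s + γ₀ / 2 * s ^ 2) = α * f y + α * s + α * (γ₀ / 2 * s ^ 2) := by
        ring
      rw [he]
      linarith [h2log, hkey, hexpand]
    exact le_of_mul_le_mul_left hmul hα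
  have hγle : γ / 2 * s ^ 2 ≤ γ₀ / 2 * s ^ 2 := by
    apply mul_le_mul_of_nonneg_right _ (sq_nonneg s)
    linarith [hγ]
  linarith
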